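/- Let U be a finite set partitioned into G_1, …, G_k, let g : 2^U → ℝ≥0 be subadditive with g(∅) = 0, let each player i have a monotone normalized cost function c_i : 2^{G_i} → ℝ≥0 with c(S) := Σ_i c_i(S ∩ G_i), let B ≥ 0 and Val > 0, and let S ⊆ U satisfy c(S) ≤ B. Then there exists T ⊆ S with c(T) ≤ B/2 and min{ vbench_g(S) − Val, Val − max_{e∈S} g({e}) } < g(T) ≤ Val, where vbench_g(S) := g(S) − max_{i∈[k]} g(S ∩ G_i) and the maximum over an empty set is taken to be 0. -/

import Mathlib

open Finset

private lemma sum_singletons' {n : ℕ} (g : Finset (Fin n) → ℝ) (hg0 : g ∅ = 0)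
    (hgsub : ∀ S T : Finset (Fin n), g (S ∪ T) ≤ g S + g T) (T : Finset (Fin n)) :
    g T ≤ ∑ e ∈ T, g {e} := by
  induction T using Finset.induction with
  | empty => simp [hg0]
  | insert a s h ih =>
    rw [Finset.sum_insert h]
    calc g (insert a s) = g ({a} ∪ s) := by rw [Finset.insert_eq]
      _ ≤ g {a} + g s := hgsub _ _
      _ ≤ g {a} + ∑ e ∈ s, g {e} := by linarith

private lemma chain' {n : ℕ} (g : Finset (Fin n) → ℝ) (hg0 : g ∅ = 0)
    (hgsub : ∀ S T : Finset (Fin n), g (S ∪ T) ≤ g S + g T)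
    (Val M : ℝ) (hVal : 0 < Val) :
    ∀ W : Finset (Fin n), (∀ e ∈ W, g {e} ≤ M) → Val - M < g W →
      ∃ T ⊆ W, Val - M < g T ∧ g T ≤ Val := by
  intro W
  induction W using Finset.strongInductionOn with
  | _ W ih =>
    intro hWM hWg
    by_cases hle : g W ≤ Val
    · exact ⟨W, Finset.Subset.refl W, hWg, hle⟩
    · push_neg at hle
      have hne : W.Nonempty := by
        rcases W.eq_empty_or_nonempty with h | h
        · exfalso; rw [h, hg0] at hle; linarith
        · exact h
      obtain ⟨e, he⟩ := hne
      have hsub : W.erase e ⊂ W := Finset.erase_ssubset he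
      have hgW : g W ≤ g (W.erase e) + g {e} := by
        have hW : W = W.erase e ∪ {e} := by
          rw [Finset.union_comm, ← Finset.insert_eq, Finset.insert_erase he]
        calc g W = g (W.erase e ∪ {e}) := by rw [← hW]
          _ ≤ _ := hgsub _ _
      have h1 : Val - M < g (W.erase e) := by
        have := hWM e he; linarith
      obtain ⟨T, hT1, hT2⟩ := ih (W.erase e) hsub
        (fun x hx => hWM x (Finset.mem_of_mem_erase hx)) h1
      exact ⟨T, hT1.trans (Finset.erase_subset e W), hT2⟩

/-- pruning lemma, general costs. Let `g` be subadditive and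
normalized, let each player `i` have a monotone normalized cost function on `G_i`, let
`c(S) = ∑_i c_i (S ∩ G_i)`, `B ≥ 0`, `Val > 0`, and let `S` satisfy `c S ≤ B`. Then
there is `T ⊆ S` with `c T ≤ B/2` and
`min (vbench_g S − Val) (Val − max_{e∈S} g {e}) < g T ≤ Val`
(the maximum over an empty set being `0`, as is `sSup ∅` in `ℝ`). -/
theorem stmt9 {n k : ℕ} (hk : 0 < k) (G : Fin k → Finset (Fin n))
    (hdisj : ∀ i j : Fin k, i ≠ j → Disjoint (G i) (G j))
    (hcover : Finset.univ.biUnion G = (Finset.univ : Finset (Fin n)))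
    (g : Finset (Fin n) → ℝ) (hg0 : g ∅ = 0) (hgnn : ∀ S, 0 ≤ g S)
    (hgsub : ∀ S T : Finset (Fin n), g (S ∪ T) ≤ g S + g T)
    (c : Fin k → Finset (Fin n) → ℝ)
    (hc0 : ∀ i, c i ∅ = 0)
    (hcnn : ∀ i (S : Finset (Fin n)), S ⊆ G i → 0 ≤ c i S)
    (hcmono : ∀ i (S T : Finset (Fin n)), S ⊆ T → T ⊆ G i → c i S ≤ c i T)
    (B Val : ℝ) (hB : 0 ≤ B) (hVal : 0 < Val)
    (S : Finset (Fin n)) (hS : (∑ i, c i (S ∩ G i)) ≤ B) :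
    ∃ T ⊆ S, (∑ i, c i (T ∩ G i)) ≤ B / 2 ∧
      min ((g S - sSup {x : ℝ | ∃ i : Fin k, x = g (S ∩ G i)}) - Val)
          (Val - sSup {x : ℝ | ∃ e ∈ S, x = g {e}}) < g T ∧
      g T ≤ Val := by
  classical
  set MX := sSup {x : ℝ | ∃ i : Fin k, x = g (S ∩ G i)} with hMXdef
  set M := sSup {x : ℝ | ∃ e ∈ S, x = g {e}} with hMdef
  -- basic facts about MX
  have hMXset : {x : ℝ | ∃ i : Fin k, x = g (S ∩ G i)} =
      Set.range (fun i : Fin k => g (S ∩ G i)) := by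
    ext x; simp [eq_comm]
  have hMXub : ∀ i : Fin k, g (S ∩ G i) ≤ MX := by
    intro i
    apply le_csSup
    · rw [hMXset]; exact (Set.finite_range _).bddAbove
    · exact ⟨i, rfl⟩
  have hMX0 : 0 ≤ MX := le_trans (hgnn _) (hMXub ⟨0, hk⟩)
  -- basic facts about M
  have hMub : ∀ e ∈ S, g {e} ≤ M := by
    intro e he
    apply le_csSup
    · have : {x : ℝ | ∃ e ∈ S, x = g {e}} = (fun e : Fin n => g {e}) '' ↑S := by
        ext x; simp [eq_comm]
      rw [this]; exact (S.finite_toSet.image _).bddAbove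
    · exact ⟨e, he, rfl⟩
  by_cases hmin : min ((g S - MX) - Val) (Val - M) < 0
  · refine ⟨∅, Finset.empty_subset S, ?_, ?_, ?_⟩
    · simp only [Finset.empty_inter, hc0, Finset.sum_const_zero]; linarith
    · rw [hg0]; exact hmin
    · rw [hg0]; linarith
  · push_neg at hmin
    rw [le_min_iff] at hmin
    obtain ⟨h1, h2⟩ := hmin
    -- S is nonempty
    have hSne : S.Nonempty := by
      rcases S.eq_empty_or_nonempty with h | h
      · exfalso; rw [h, hg0] at h1; linarith
      · exact h
    -- M > 0
    have hMpos : 0 < M := by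
      by_contra hM0
      push_neg at hM0
      have hsum : g S ≤ ∑ e ∈ S, g {e} := sum_singletons' g hg0 hgsub S
      have : ∑ e ∈ S, g {e} ≤ 0 :=
        Finset.sum_nonpos (fun e he => le_trans (hMub e he) hM0)
      linarith
    -- cost function on sets of groups
    set cost : Finset (Fin k) → ℝ := fun I => ∑ i ∈ I, c i (S ∩ G i) with hcostdef
    set TI : Finset (Fin k) → Finset (Fin n) := fun I => S ∩ I.biUnion G with hTIdef
    have hTIS : ∀ I, TI I ⊆ S := fun I => Finset.inter_subset_left
    -- key cost bound
    have key1 : ∀ (I : Finset (Fin k)) (T : Finset (Fin n)), T ⊆ TI I →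
        (∑ i, c i (T ∩ G i)) ≤ cost I := by
      intro I T hT
      have hz : ∀ i ∉ I, T ∩ G i = ∅ := by
        intro i hi
        rw [Finset.eq_empty_iff_forall_notMem]
        intro x hx
        have hxT := (Finset.mem_inter.1 hx).1
        have hxGi := (Finset.mem_inter.1 hx).2
        have hxTI := hT hxT
        obtain ⟨j, hjI, hxGj⟩ := Finset.mem_biUnion.1 (Finset.mem_inter.1 hxTI).2
        have hij : i ≠ j := fun h => hi (h ▸ hjI)
        exact (Finset.disjoint_left.1 (hdisj i j hij)) hxGi hxGj
      have hTSsub : T ⊆ S := hT.trans (hTIS I)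
      calc (∑ i, c i (T ∩ G i)) = ∑ i ∈ I, c i (T ∩ G i) :=
            (Finset.sum_subset I.subset_univ (fun i _ hi => by rw [hz i hi, hc0 i])).symm
        _ ≤ ∑ i ∈ I, c i (S ∩ G i) := by
            apply Finset.sum_le_sum
            intro i _
            apply hcmono i _ _ _ Finset.inter_subset_right
            intro x hx
            exact Finset.mem_inter.2 ⟨hTSsub (Finset.mem_inter.1 hx).1,
              (Finset.mem_inter.1 hx).2⟩
        _ = cost I := rfl
    -- decomposition of g S
    have hdecomp : ∀ (I : Finset (Fin k)) (m : Fin k),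
        g S ≤ g (TI I) + g (S ∩ G m) + g (TI ((Finset.univ \ I).erase m)) := by
      intro I m
      have hSeq : S = TI I ∪ ((S ∩ G m) ∪ TI ((Finset.univ \ I).erase m)) := by
        apply Finset.Subset.antisymm
        · intro x hx
          have hxU : x ∈ Finset.univ.biUnion G := by
            rw [hcover]; exact Finset.mem_univ x
          obtain ⟨i, _, hxGi⟩ := Finset.mem_biUnion.1 hxU
          by_cases hiI : i ∈ I
          · exact Finset.mem_union.2 (Or.inl (Finset.mem_inter.2
              ⟨hx, Finset.mem_biUnion.2 ⟨i, hiI, hxGi⟩⟩))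
          · by_cases him : i = m
            · exact Finset.mem_union.2 (Or.inr (Finset.mem_union.2 (Or.inl
                (Finset.mem_inter.2 ⟨hx, him ▸ hxGi⟩))))
            · refine Finset.mem_union.2 (Or.inr (Finset.mem_union.2 (Or.inr
                (Finset.mem_inter.2 ⟨hx, Finset.mem_biUnion.2 ⟨i, ?_, hxGi⟩⟩))))
              exact Finset.mem_erase.2 ⟨him, Finset.mem_sdiff.2 ⟨Finset.mem_univ i, hiI⟩⟩
        · intro x hx
          rcases Finset.mem_union.1 hx with h | h
          · exact (hTIS I) h
          · rcases Finset.mem_union.1 h with h' | h'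
            · exact (Finset.mem_inter.1 h').1
            · exact (hTIS _) h'
      calc g S = g (TI I ∪ ((S ∩ G m) ∪ TI ((Finset.univ \ I).erase m))) := by rw [← hSeq]
        _ ≤ g (TI I) + g ((S ∩ G m) ∪ TI ((Finset.univ \ I).erase m)) := hgsub _ _
        _ ≤ g (TI I) + (g (S ∩ G m) + g (TI ((Finset.univ \ I).erase m))) := by
            have := hgsub (S ∩ G m) (TI ((Finset.univ \ I).erase m)); linarith
        _ = _ := by ring
    -- total cost identity
    have key3 : ∀ I : Finset (Fin k),
        cost (Finset.univ \ I) + cost I = ∑ i, c i (S ∩ G i) :=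
      fun I => Finset.sum_sdiff I.subset_univ
    -- maximal I with cost ≤ B/2
    have hPfin : {I : Finset (Fin k) | cost I ≤ B / 2}.Finite := Set.toFinite _
    have hPne : {I : Finset (Fin k) | cost I ≤ B / 2}.Nonempty := by
      refine ⟨∅, ?_⟩
      simp only [Set.mem_setOf_eq, hcostdef, Finset.sum_empty]
      linarith
    obtain ⟨I, hIP, hImax⟩ := Set.Finite.exists_maximalFor id _ hPfin hPne
    simp only [Set.mem_setOf_eq] at hIP
    by_cases hJ : Finset.univ \ I = ∅
    · -- all of S has cost ≤ B/2
      have hIuniv : I = Finset.univ :=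
        Finset.Subset.antisymm I.subset_univ (Finset.sdiff_eq_empty_iff_subset.1 hJ)
      have hTIu : TI Finset.univ = S := by
        rw [hTIdef]; simp only [hcover]; exact Finset.inter_univ S
      have hgS : Val - M < g S := by linarith
      obtain ⟨T, hTsub, hT1, hT2⟩ := chain' g hg0 hgsub Val M hVal S hMub hgS
      refine ⟨T, hTsub, ?_, ?_, hT2⟩
      · have h5 := key1 Finset.univ T (by rw [hTIu]; exact hTsub)
        have hIP' : cost Finset.univ ≤ B / 2 := hIuniv ▸ hIP
        linarith
      · exact lt_of_le_of_lt (min_le_right _ _) hT1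
    · obtain ⟨m, hm⟩ := Finset.nonempty_of_ne_empty hJ
      have hmI : m ∉ I := (Finset.mem_sdiff.1 hm).2
      -- maximality: cost I + c m (S ∩ G m) > B/2
      have hmax_step : B / 2 < cost I + c m (S ∩ G m) := by
        by_contra hle
        push_neg at hle
        have hins : cost (insert m I) ≤ B / 2 := by
          show (∑ i ∈ insert m I, c i (S ∩ G i)) ≤ B / 2
          rw [Finset.sum_insert hmI]
          show c m (S ∩ G m) + cost I ≤ B / 2
          linarith
        have := hImax (j := insert m I) hins (Finset.subset_insert m I)
        simp only [id] at this
        exact hmI (this (Finset.mem_insert_self m I))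
      -- cost of the other side
      have hJsplit : cost (Finset.univ \ I) =
          c m (S ∩ G m) + cost ((Finset.univ \ I).erase m) := by
        rw [hcostdef]
        exact (Finset.add_sum_erase _ _ hm).symm
      have hCcost : cost ((Finset.univ \ I).erase m) ≤ B / 2 := by
        have h3 := key3 I
        linarith
      have hAC := hdecomp I m
      have hsum : g S - MX ≤ g (TI I) + g (TI ((Finset.univ \ I).erase m)) := by
        have := hMXub m; linarith
      rcases lt_or_ge (Val - M) (g (TI I)) with hA | hA
      · obtain ⟨T, hTsub, hT1, hT2⟩ := chain' g hg0 hgsub Val M hVal (TI I)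
          (fun e he => hMub e ((hTIS I) he)) hA
        exact ⟨T, hTsub.trans (hTIS I), (key1 I T hTsub).trans hIP,
          lt_of_le_of_lt (min_le_right _ _) hT1, hT2⟩
      rcases lt_or_ge (Val - M) (g (TI ((Finset.univ \ I).erase m))) with hC | hC
      · obtain ⟨T, hTsub, hT1, hT2⟩ := chain' g hg0 hgsub Val M hVal _
          (fun e he => hMub e ((hTIS _) he)) hC
        exact ⟨T, hTsub.trans (hTIS _), (key1 _ T hTsub).trans hCcost,
          lt_of_le_of_lt (min_le_right _ _) hT1, hT2⟩
      rcases lt_or_ge ((g S - MX) - Val) (g (TI I)) with hA2 | hA2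
      · exact ⟨TI I, hTIS I, (key1 I _ (Finset.Subset.refl _)).trans hIP,
          lt_of_le_of_lt (min_le_left _ _) hA2, by linarith⟩
      rcases lt_or_ge ((g S - MX) - Val) (g (TI ((Finset.univ \ I).erase m))) with hC2 | hC2
      · exact ⟨TI _, hTIS _, (key1 _ _ (Finset.Subset.refl _)).trans hCcost,
          lt_of_le_of_lt (min_le_left _ _) hC2, by linarith⟩
      · exfalso; linarith
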